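/- For every integer m ≥ 1 and every nonzero Schwartz function σ on ℝ, there exists a Schwartz function ρ on ℝ whose Fourier transform ρ^♯ vanishes on a neighborhood of 0 and which is admissible with normalization 1, i.e. ⟪σ,ρ⟫ := (2π)^{m−1} ∫_ℝ σ^♯(ω)·conj(ρ^♯(ω))·|ω|^{−m} dω = 1. -/

import Mathlib

open MeasureTheory Complex

/-- Fourier transform in the bias variable: `φ^♯(ω) = ∫ φ(b) e^{-iωb} db`. -/
noncomputable def biasFourier (φ : ℝ → ℂ) (ω : ℝ) : ℂ :=
  ∫ b : ℝ, φ b * Complex.exp (-Complex.I * ω * b)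

/-- A smooth compactly supported function is a Schwartz function. -/
noncomputable def mySchwartzOfCompactSupport (f : ℝ → ℂ) (hf : ContDiff ℝ ((⊤ : ℕ∞)) f)
    (h : HasCompactSupport f) : SchwartzMap ℝ ℂ where
  toFun := f
  smooth' := hf
  decay' := by
    intro k n
    have h1 : HasCompactSupport (iteratedFDeriv ℝ n f) := h.iteratedFDeriv n
    have hcont : Continuous fun x : ℝ => ‖x‖ ^ k * ‖iteratedFDeriv ℝ n f x‖ :=
      (continuous_norm.pow k).mul (hf.continuous_iteratedFDeriv (mod_cast le_top)).norm
    have h2 : HasCompactSupport fun x : ℝ => ‖x‖ ^ k * ‖iteratedFDeriv ℝ n f x‖ :=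
      h1.norm.mul_left
    obtain ⟨C, hC⟩ := hcont.bddAbove_range_of_hasCompactSupport h2
    exact ⟨C, fun x => hC (Set.mem_range_self x)⟩

lemma biasFourier_eq_fourierIntegral (φ : ℝ → ℂ) (ω : ℝ) :
    biasFourier φ ω = FourierTransform.fourier φ (ω / (2 * Real.pi)) := by
  rw [Real.fourier_real_eq_integral_exp_smul]
  unfold biasFourier
  congr 1
  ext b
  rw [smul_eq_mul, mul_comm]
  congr 1
  have hπ : (Real.pi : ℂ) ≠ 0 := by exact_mod_cast Real.pi_ne_zero
  congr 1
  push_cast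
  field_simp

theorem exists_admissible_ridgelet_function (m : ℕ) (hm : 1 ≤ m)
    (σ : SchwartzMap ℝ ℂ) (hσ : σ ≠ 0) :
    ∃ ρ : SchwartzMap ℝ ℂ,
      (0 : ℝ) ∉ tsupport (biasFourier ρ) ∧
      (((2 * Real.pi) ^ (m - 1) : ℝ) : ℂ)
          * (∫ ω : ℝ, biasFourier σ ω * starRingEnd ℂ (biasFourier ρ ω)
              * ((|ω| ^ (-(m : ℤ)) : ℝ) : ℂ)) = 1 := by
  classical
  have h2π : (0:ℝ) < 2 * Real.pi := by positivity
  set Fσ : SchwartzMap ℝ ℂ := (SchwartzMap.fourierTransformCLE ℂ (SchwartzMap ℝ ℂ) (F := SchwartzMap ℝ ℂ)) σ with hFσdef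
  -- find a point ξ₀ ≠ 0 where Fσ ≠ 0
  have hFσne : Fσ ≠ 0 := by
    intro h
    rw [hFσdef, ContinuousLinearEquiv.map_eq_zero_iff] at h
    exact hσ h
  obtain ⟨ξ₁, hξ₁⟩ : ∃ ξ, Fσ ξ ≠ 0 := by
    by_contra h
    push_neg at h
    exact hFσne (DFunLike.ext _ _ (by simpa using h))
  obtain ⟨ξ₀, hξ₀F, hξ₀ne⟩ : ∃ ξ₀, Fσ ξ₀ ≠ 0 ∧ ξ₀ ≠ 0 := by
    have hev : ∀ᶠ ξ in nhds ξ₁, Fσ ξ ≠ 0 :=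
      Fσ.continuous.continuousAt.eventually_ne hξ₁
    have h2 : ∀ᶠ ξ in nhdsWithin ξ₁ {ξ₁}ᶜ, Fσ ξ ≠ 0 ∧ ξ ≠ ξ₁ := by
      filter_upwards [hev.filter_mono nhdsWithin_le_nhds, self_mem_nhdsWithin] with ξ hA hB
      exact ⟨hA, hB⟩
    rcases eq_or_ne ξ₁ 0 with h0 | h0
    · obtain ⟨ξ₀, hA, hB⟩ := h2.exists
      exact ⟨ξ₀, hA, h0 ▸ hB⟩
    · exact ⟨ξ₁, hξ₁, h0⟩
  set R := |ξ₀| with hRdef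
  have hRpos : 0 < R := abs_pos.mpr hξ₀ne
  set χ : ContDiffBump ξ₀ := ⟨R/2, 3*R/4, by positivity, by linarith⟩ with hχdef
  -- χ vanishes near 0
  have hχzero : ∀ ξ : ℝ, |ξ| ≤ R/4 → χ ξ = 0 := by
    intro ξ hξ
    apply χ.zero_of_le_dist
    have : dist ξ ξ₀ ≥ R - R/4 := by
      have := abs_sub_abs_le_abs_sub ξ₀ ξ
      rw [Real.dist_eq, abs_sub_comm]
      linarith
    show (3*R/4 : ℝ) ≤ dist ξ ξ₀
    linarith
  -- the positive weight function
  set r : ℝ → ℝ := fun ξ => χ ξ * Complex.normSq (Fσ ξ) * |ξ| ^ (-(m:ℤ)) with hrdef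
  have hrzero : ∀ ξ : ℝ, |ξ| ≤ R/4 → r ξ = 0 := by
    intro ξ hξ
    simp [hrdef, hχzero ξ hξ]
  have hrcont : Continuous r := by
    rw [continuous_iff_continuousAt]
    intro ξ
    rcases eq_or_ne ξ 0 with h0 | h0
    · subst h0
      have hev : r =ᶠ[nhds (0:ℝ)] fun _ => (0:ℝ) := by
        filter_upwards [Metric.ball_mem_nhds (0:ℝ) (by positivity : (0:ℝ) < R/4)] with y hy
        have hy' : |y| < R/4 := by
          simpa [Real.norm_eq_abs] using mem_ball_zero_iff.mp hy
        exact hrzero y hy'.le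
      exact hev.continuousAt
    · have h1 : ContinuousAt (fun ξ : ℝ => |ξ| ^ (-(m:ℤ))) ξ :=
        (continuousAt_zpow₀ (|ξ|) (-(m:ℤ)) (Or.inl (abs_ne_zero.mpr h0))).comp
          continuous_abs.continuousAt
      exact ((χ.continuous.continuousAt.mul
        ((Complex.continuous_normSq.comp Fσ.continuous).continuousAt)).mul h1)
  have hrnonneg : ∀ ξ, 0 ≤ r ξ := fun ξ => by
    have := χ.nonneg (x := ξ)
    have := Complex.normSq_nonneg (Fσ ξ)
    have : (0:ℝ) ≤ |ξ| ^ (-(m:ℤ)) := zpow_nonneg (abs_nonneg ξ) _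
    positivity
  have hrcompact : HasCompactSupport r := by
    apply HasCompactSupport.intro (isCompact_closedBall ξ₀ χ.rOut)
    intro ξ hξ
    have : χ ξ = 0 := χ.zero_of_le_dist (le_of_lt (by simpa [Metric.mem_closedBall] using hξ))
    simp [hrdef, this]
  have hrint : Integrable r := hrcont.integrable_of_hasCompactSupport hrcompact
  have hrposξ₀ : 0 < r ξ₀ := by
    have h1 : χ ξ₀ = 1 := χ.one_of_mem_closedBall (by simp [Metric.mem_closedBall]; positivity)
    have h2 : 0 < Complex.normSq (Fσ ξ₀) := Complex.normSq_pos.mpr hξ₀F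
    have h3 : (0:ℝ) < |ξ₀| ^ (-(m:ℤ)) := zpow_pos hRpos _
    rw [hrdef]
    simp only [h1, one_mul]
    positivity
  set I := ∫ ξ, r ξ with hIdef
  have hIpos : 0 < I := by
    rw [hIdef, integral_pos_iff_support_of_nonneg hrnonneg hrint]
    have hopen : IsOpen {ξ : ℝ | 0 < r ξ} := isOpen_lt continuous_const hrcont
    have hsub : {ξ : ℝ | 0 < r ξ} ⊆ Function.support r := fun ξ hξ => ne_of_gt hξ
    calc (0:ENNReal) < volume {ξ : ℝ | 0 < r ξ} := hopen.measure_pos volume ⟨ξ₀, hrposξ₀⟩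
      _ ≤ volume (Function.support r) := measure_mono hsub
  set c : ℝ := I⁻¹ with hcdef
  -- the Fourier transform of ρ
  set G : ℝ → ℂ := fun ξ => ((c * χ ξ : ℝ) : ℂ) * Fσ ξ with hGdef
  have hGsmooth : ContDiff ℝ ((⊤ : ℕ∞)) G := by
    exact (Complex.ofRealCLM.contDiff.comp (contDiff_const.mul χ.contDiff)).mul (Fσ.smooth ⊤)
  have hGcompact : HasCompactSupport G := by
    apply HasCompactSupport.intro (isCompact_closedBall ξ₀ χ.rOut)
    intro ξ hξ
    have : χ ξ = 0 := χ.zero_of_le_dist (le_of_lt (by simpa [Metric.mem_closedBall] using hξ))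
    simp [hGdef, this]
  set g : SchwartzMap ℝ ℂ := mySchwartzOfCompactSupport G hGsmooth hGcompact with hgdef
  set ρ : SchwartzMap ℝ ℂ := (SchwartzMap.fourierTransformCLE ℂ (SchwartzMap ℝ ℂ) (F := SchwartzMap ℝ ℂ)).symm g with hρdef
  have hFρ : ∀ ω : ℝ, FourierTransform.fourier (⇑ρ) ω = G ω := by
    intro ω
    have h1 : (SchwartzMap.fourierTransformCLE ℂ (SchwartzMap ℝ ℂ) (F := SchwartzMap ℝ ℂ)) ρ = g :=
      (SchwartzMap.fourierTransformCLE ℂ (SchwartzMap ℝ ℂ) (F := SchwartzMap ℝ ℂ)).apply_symm_apply g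
    have h2 : FourierTransform.fourier (⇑ρ) ω = ((SchwartzMap.fourierTransformCLE ℂ (SchwartzMap ℝ ℂ) (F := SchwartzMap ℝ ℂ)) ρ) ω := rfl
    rw [h2, h1]
    rfl
  have hbiasρ : ∀ ω : ℝ, biasFourier (⇑ρ) ω = G (ω / (2 * Real.pi)) := by
    intro ω
    rw [biasFourier_eq_fourierIntegral, hFρ]
  have hbiasσ : ∀ ω : ℝ, biasFourier (⇑σ) ω = Fσ (ω / (2 * Real.pi)) := by
    intro ω
    rw [biasFourier_eq_fourierIntegral]
    rfl
  refine ⟨ρ, ?_, ?_⟩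
  · -- 0 ∉ tsupport (biasFourier ρ)
    rw [notMem_tsupport_iff_eventuallyEq]
    filter_upwards [Metric.ball_mem_nhds (0:ℝ) (by positivity : (0:ℝ) < Real.pi * R / 2)]
      with ω hω
    rw [hbiasρ]
    have hω' : |ω| < Real.pi * R / 2 := by simpa [Real.dist_eq] using hω
    have hsmall : |ω / (2 * Real.pi)| ≤ R / 4 := by
      rw [abs_div, abs_of_pos h2π]
      rw [div_le_iff₀ h2π]
      nlinarith [Real.pi_pos]
    have : χ (ω / (2 * Real.pi)) = 0 := hχzero _ hsmall
    simp [hGdef, this]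
  · -- the normalization
    have hpoint : ∀ ω : ℝ,
        biasFourier (⇑σ) ω * starRingEnd ℂ (biasFourier (⇑ρ) ω) * ((|ω| ^ (-(m:ℤ)) : ℝ) : ℂ)
        = ((c * (2*Real.pi) ^ (-(m:ℤ)) : ℝ) : ℂ) * ((r (ω / (2 * Real.pi)) : ℝ) : ℂ) := by
      intro ω
      rw [hbiasρ, hbiasσ]
      set ξ := ω / (2 * Real.pi) with hξdef
      have habs : |ω| = (2 * Real.pi) * |ξ| := by
        rw [hξdef, abs_div, abs_of_pos h2π]
        field_simp
      rw [habs, mul_zpow, hGdef]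
      simp only [map_mul, Complex.conj_ofReal]
      rw [hrdef]
      push_cast
      rw [← Complex.mul_conj]
      ring
    rw [show (∫ ω : ℝ, biasFourier (⇑σ) ω * starRingEnd ℂ (biasFourier (⇑ρ) ω)
          * ((|ω| ^ (-(m:ℤ)) : ℝ) : ℂ))
        = ∫ ω : ℝ, ((c * (2*Real.pi) ^ (-(m:ℤ)) : ℝ) : ℂ)
            * ((r (ω / (2 * Real.pi)) : ℝ) : ℂ) from integral_congr_ae
          (Filter.Eventually.of_forall hpoint)]
    rw [integral_const_mul]
    rw [MeasureTheory.Measure.integral_comp_div (fun ξ : ℝ => ((r ξ : ℝ) : ℂ)) (2 * Real.pi)]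
    have hIof : (∫ ξ : ℝ, ((r ξ : ℝ) : ℂ)) = ((I : ℝ) : ℂ) := by
      rw [hIdef]; exact integral_ofReal
    rw [hIof, abs_of_pos h2π]
    rw [Complex.real_smul]
    norm_cast
    have h2π' : (2 * Real.pi : ℝ) ≠ 0 := ne_of_gt h2π
    have hIne : I ≠ 0 := ne_of_gt hIpos
    have h1 : ((2 * Real.pi : ℝ)) ^ (m-1) = (2 * Real.pi : ℝ) ^ ((m:ℤ) - 1) := by
      rw [← zpow_natCast]
      congr 1
      omega
    have hexp : ((2 * Real.pi : ℝ)) ^ (m-1) * (((2 * Real.pi : ℝ)) ^ (-(m:ℤ)) * (2 * Real.pi))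
        = 1 := by
      calc ((2 * Real.pi : ℝ)) ^ (m-1) * (((2 * Real.pi : ℝ)) ^ (-(m:ℤ)) * (2 * Real.pi))
          = (2 * Real.pi : ℝ) ^ ((m:ℤ) - 1) * ((2 * Real.pi : ℝ) ^ (-(m:ℤ))
              * (2 * Real.pi : ℝ) ^ (1:ℤ)) := by rw [h1, zpow_one]
        _ = (2 * Real.pi : ℝ) ^ (((m:ℤ) - 1) + (-(m:ℤ) + 1)) := by
              rw [← zpow_add₀ h2π', ← zpow_add₀ h2π']
        _ = 1 := by
              rw [show ((m:ℤ) - 1) + (-(m:ℤ) + 1) = 0 by ring, zpow_zero]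
    have hci : c * I = 1 := inv_mul_cancel₀ hIne
    linear_combination (c * I) * hexp + hci
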